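/- arXiv:1811.03396 — 4 statements merged into one kernel-verified Lean document; each statement's English description precedes it below -/
import Mathlib

section
/- For all integers p, q ≥ 1, every biclique of the grid graph G_{p,q} has at most 4 edges. -/
/-- The grid graph `G_{p,q}` with vertex set `{1,…,q} × {1,…,p}` (modelled as
`Fin q × Fin p`), where two vertices are adjacent iff their coordinates differ
by a total of 1. -/
def gridGraph (p q : ℕ) : SimpleGraph (Fin q × Fin p) where
  Adj v w := Nat.dist (v.1 : ℕ) (w.1 : ℕ) + Nat.dist (v.2 : ℕ) (w.2 : ℕ) = 1
  symm := by
    constructor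
    intro v w h
    rwa [Nat.dist_comm ((w.1 : ℕ)), Nat.dist_comm ((w.2 : ℕ))]
  loopless := by
    constructor
    intro v h
    simp [Nat.dist_self] at h

/-- `H` is a biclique of `G`: a subgraph of `G` that is a complete bipartite
graph with parts `A` and `B`. -/
def IsBiclique {V : Type*} (G H : SimpleGraph V) : Prop :=
  H ≤ G ∧ ∃ A B : Set V, ∀ v w, H.Adj v w ↔ (v ∈ A ∧ w ∈ B) ∨ (v ∈ B ∧ w ∈ A)

/-- The biclique covering number of `G`: the least `n` such that `n` bicliques
of `G` cover all edges of `G`. -/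
noncomputable def bcn {V : Type*} (G : SimpleGraph V) : ℕ :=
  sInf {n | ∃ H : Fin n → SimpleGraph V,
    (∀ i, IsBiclique G (H i)) ∧ ∀ e ∈ G.edgeSet, ∃ i, e ∈ (H i).edgeSet}

/-! ### Arithmetic helper lemmas -/

/-- Structured form of grid adjacency (with `Nat.dist` unfolded). -/
lemma adj_classify (u1 u2 a1 a2 : ℕ)
    (h : (u1 - a1 + (a1 - u1)) + (u2 - a2 + (a2 - u2)) = 1) :
    (u1 = a1 ∧ (u2+1 = a2 ∨ a2+1 = u2)) ∨ ((u1+1 = a1 ∨ a1+1 = u1) ∧ u2 = a2) := by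
  omega

/-- If two distinct points have a common neighbour, they are at distance 2,
either in a straight line or diagonally. -/
lemma adj_rel (u1 u2 v1 v2 a1 a2 : ℕ)
    (hu : (u1 = a1 ∧ (u2+1 = a2 ∨ a2+1 = u2)) ∨ ((u1+1 = a1 ∨ a1+1 = u1) ∧ u2 = a2))
    (hv : (v1 = a1 ∧ (v2+1 = a2 ∨ a2+1 = v2)) ∨ ((v1+1 = a1 ∨ a1+1 = v1) ∧ v2 = a2))
    (hne : ¬(u1 = v1 ∧ u2 = v2)) :
    ((u1 = v1 ∧ (u2+2 = v2 ∨ v2+2 = u2)) ∨ ((u1+2 = v1 ∨ v1+2 = u1) ∧ u2 = v2)) ∨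
    ((u1+1 = v1 ∨ v1+1 = u1) ∧ (u2+1 = v2 ∨ v2+1 = u2)) := by
  rcases hu with ⟨e1, d1⟩ | ⟨d1, e1⟩ <;> rcases hv with ⟨e2, d2⟩ | ⟨d2, e2⟩ <;> omega

/-- A common neighbour of two points at straight-line distance 2 is their
midpoint. -/
lemma mid_of_straight (u1 u2 v1 v2 a1 a2 : ℕ)
    (hst : (u1 = v1 ∧ (u2+2 = v2 ∨ v2+2 = u2)) ∨ ((u1+2 = v1 ∨ v1+2 = u1) ∧ u2 = v2))
    (hu : (u1 = a1 ∧ (u2+1 = a2 ∨ a2+1 = u2)) ∨ ((u1+1 = a1 ∨ a1+1 = u1) ∧ u2 = a2))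
    (hv : (v1 = a1 ∧ (v2+1 = a2 ∨ a2+1 = v2)) ∨ ((v1+1 = a1 ∨ a1+1 = v1) ∧ v2 = a2)) :
    2*a1 = u1 + v1 ∧ 2*a2 = u2 + v2 := by
  rcases hu with ⟨e1, d1⟩ | ⟨d1, e1⟩ <;> rcases hv with ⟨e2, d2⟩ | ⟨d2, e2⟩ <;> omega

/-- A common neighbour of two diagonally placed points is one of the two
corner points. -/
lemma corner_of_diag (u1 u2 v1 v2 a1 a2 : ℕ)
    (d : u1+1 = v1 ∨ v1+1 = u1) (e : u2+1 = v2 ∨ v2+1 = u2)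
    (hu : (u1 = a1 ∧ (u2+1 = a2 ∨ a2+1 = u2)) ∨ ((u1+1 = a1 ∨ a1+1 = u1) ∧ u2 = a2))
    (hv : (v1 = a1 ∧ (v2+1 = a2 ∨ a2+1 = v2)) ∨ ((v1+1 = a1 ∨ a1+1 = v1) ∧ v2 = a2)) :
    (a1 = u1 ∧ a2 = v2) ∨ (a1 = v1 ∧ a2 = u2) := by
  rcases hu with ⟨e1, d1⟩ | ⟨d1, e1⟩ <;> rcases hv with ⟨e2, d2⟩ | ⟨d2, e2⟩ <;> omega

/-! ### Geometric lemmas about the grid graph -/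

/-- Any set of neighbours of a fixed vertex in the grid graph has at most 4
elements. -/
lemma nbr_ncard {p q : ℕ} (v : Fin q × Fin p) (S : Set (Fin q × Fin p))
    (hS : ∀ w ∈ S, (gridGraph p q).Adj v w) : S.ncard ≤ 4 := by
  classical
  set f : Fin q × Fin p → ℕ × ℕ := fun w => ((w.1 : ℕ), (w.2 : ℕ)) with hf
  have hinj : Function.Injective f := by
    intro a b hab
    simp only [hf, Prod.mk.injEq] at hab
    exact Prod.ext (Fin.val_injective hab.1) (Fin.val_injective hab.2)
  have h1 : S.ncard = (f '' S).ncard := (Set.ncard_image_of_injective S hinj).symm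
  rw [h1]
  have hsub : f '' S ⊆ {((v.1 : ℕ) + 1, (v.2 : ℕ)), ((v.1 : ℕ) - 1, (v.2 : ℕ)),
      ((v.1 : ℕ), (v.2 : ℕ) + 1), ((v.1 : ℕ), (v.2 : ℕ) - 1)} := by
    rintro _ ⟨w, hw, rfl⟩
    have := hS w hw
    simp only [gridGraph, Nat.dist] at this
    simp only [Set.mem_insert_iff, Set.mem_singleton_iff, hf, Prod.mk.injEq]
    omega
  calc (f '' S).ncard ≤ _ := Set.ncard_le_ncard hsub (Set.toFinite _)
    _ ≤ 4 := by
      apply le_trans (Set.ncard_insert_le _ _)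
      have := Set.ncard_insert_le ((v.1:ℕ) - 1, (v.2:ℕ))
        ({((v.1 : ℕ), (v.2 : ℕ) + 1), ((v.1 : ℕ), (v.2 : ℕ) - 1)} : Set (ℕ×ℕ))
      have h2 := Set.ncard_insert_le ((v.1:ℕ), (v.2:ℕ)+1)
        ({((v.1 : ℕ), (v.2 : ℕ) - 1)} : Set (ℕ×ℕ))
      simp [Set.ncard_singleton] at *
      omega

/-- Any set of common neighbours of two fixed distinct vertices in the grid
graph has at most 2 elements. -/
lemma common_nbr_ncard {p q : ℕ} (u v : Fin q × Fin p) (huv : u ≠ v)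
    (S : Set (Fin q × Fin p))
    (hS : ∀ w ∈ S, (gridGraph p q).Adj u w ∧ (gridGraph p q).Adj v w) :
    S.ncard ≤ 2 := by
  by_contra h
  push_neg at h
  obtain ⟨a, ha, b, hb, c, hc, hab, hac, hbc⟩ := (Set.two_lt_ncard (Set.toFinite S)).mp h
  have h1 := hS a ha
  have h2 := hS b hb
  have h3 := hS c hc
  have huv' : ¬((u.1 : ℕ) = (v.1 : ℕ) ∧ (u.2 : ℕ) = (v.2 : ℕ)) := by
    intro ⟨e1, e2⟩
    exact huv (Prod.ext (Fin.val_injective e1) (Fin.val_injective e2))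
  have hab' : ¬((a.1 : ℕ) = (b.1 : ℕ) ∧ (a.2 : ℕ) = (b.2 : ℕ)) := by
    intro ⟨e1, e2⟩
    exact hab (Prod.ext (Fin.val_injective e1) (Fin.val_injective e2))
  have hac' : ¬((a.1 : ℕ) = (c.1 : ℕ) ∧ (a.2 : ℕ) = (c.2 : ℕ)) := by
    intro ⟨e1, e2⟩
    exact hac (Prod.ext (Fin.val_injective e1) (Fin.val_injective e2))
  have hbc' : ¬((b.1 : ℕ) = (c.1 : ℕ) ∧ (b.2 : ℕ) = (c.2 : ℕ)) := by
    intro ⟨e1, e2⟩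
    exact hbc (Prod.ext (Fin.val_injective e1) (Fin.val_injective e2))
  simp only [gridGraph, Nat.dist] at h1 h2 h3
  have h1u := adj_classify _ _ _ _ h1.1
  have h1v := adj_classify _ _ _ _ h1.2
  have h2u := adj_classify _ _ _ _ h2.1
  have h2v := adj_classify _ _ _ _ h2.2
  have h3u := adj_classify _ _ _ _ h3.1
  have h3v := adj_classify _ _ _ _ h3.2
  clear h1 h2 h3
  rcases adj_rel _ _ _ _ _ _ h1u h1v huv' with hst | ⟨d, e⟩
  · obtain ⟨ka1, ka2⟩ := mid_of_straight _ _ _ _ _ _ hst h1u h1v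
    obtain ⟨kb1, kb2⟩ := mid_of_straight _ _ _ _ _ _ hst h2u h2v
    exact hab' ⟨by omega, by omega⟩
  · have ka := corner_of_diag _ _ _ _ _ _ d e h1u h1v
    have kb := corner_of_diag _ _ _ _ _ _ d e h2u h2v
    have kc := corner_of_diag _ _ _ _ _ _ d e h3u h3v
    rcases ka with ⟨ka1, ka2⟩ | ⟨ka1, ka2⟩ <;> rcases kb with ⟨kb1, kb2⟩ | ⟨kb1, kb2⟩ <;>
      rcases kc with ⟨kc1, kc2⟩ | ⟨kc1, kc2⟩ <;>
      first
      | exact hab' ⟨by omega, by omega⟩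
      | exact hac' ⟨by omega, by omega⟩
      | exact hbc' ⟨by omega, by omega⟩

theorem grid_biclique_card_le_four (p q : ℕ) (hp : 1 ≤ p) (hq : 1 ≤ q)
    (H : SimpleGraph (Fin q × Fin p)) (hH : IsBiclique (gridGraph p q) H) :
    H.edgeSet.ncard ≤ 4 := by
  classical
  obtain ⟨hle, A, B, hAB⟩ := hH
  -- all pairs in `A × B` are adjacent in the grid graph
  have hadj : ∀ a ∈ A, ∀ b ∈ B, (gridGraph p q).Adj a b := by
    intro a ha b hb
    exact hle ((hAB a b).mpr (Or.inl ⟨ha, hb⟩))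
  -- edges inject into `A ×ˢ B`
  have hsub : H.edgeSet ⊆ Function.uncurry Sym2.mk '' (A ×ˢ B) := by
    intro e he
    induction e with
    | h v w =>
      rw [SimpleGraph.mem_edgeSet] at he
      rcases (hAB v w).mp he with ⟨ha, hb⟩ | ⟨hb, ha⟩
      · exact ⟨(v, w), ⟨ha, hb⟩, rfl⟩
      · exact ⟨(w, v), ⟨ha, hb⟩, Sym2.eq_swap⟩
  have hcard : H.edgeSet.ncard ≤ A.ncard * B.ncard := by
    calc H.edgeSet.ncard ≤ (Function.uncurry Sym2.mk '' (A ×ˢ B)).ncard :=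
          Set.ncard_le_ncard hsub (Set.toFinite _)
      _ ≤ (A ×ˢ B).ncard := Set.ncard_image_le (Set.toFinite _)
      _ = A.ncard * B.ncard := by
          rw [← Nat.card_coe_set_eq, ← Nat.card_coe_set_eq,
            ← Nat.card_coe_set_eq, Nat.card_congr (Equiv.Set.prod A B), Nat.card_prod]
  refine hcard.trans ?_
  -- now bound `|A| * |B| ≤ 4`
  rcases Nat.lt_or_ge A.ncard 2 with hA | hA
  · have hA01 : A.ncard = 0 ∨ A.ncard = 1 := by omega
    rcases hA01 with h0 | h1
    · rw [h0]; omega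
    · obtain ⟨a, rfl⟩ := Set.ncard_eq_one.mp h1
      have hB : B.ncard ≤ 4 :=
        nbr_ncard a B (fun b hb => hadj a rfl b hb)
      rw [h1]; omega
  · obtain ⟨a1, ha1, a2, ha2, hane⟩ := (Set.one_lt_ncard (Set.toFinite A)).mp (by omega)
    have hB2 : B.ncard ≤ 2 :=
      common_nbr_ncard a1 a2 hane B
        (fun b hb => ⟨hadj a1 ha1 b hb, hadj a2 ha2 b hb⟩)
    rcases Nat.lt_or_ge B.ncard 2 with hB | hB
    · have hB01 : B.ncard = 0 ∨ B.ncard = 1 := by omega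
      rcases hB01 with h0 | h1
      · rw [h0]; omega
      · obtain ⟨b, rfl⟩ := Set.ncard_eq_one.mp h1
        have hA4 : A.ncard ≤ 4 :=
          nbr_ncard b A (fun a ha => (hadj a ha b rfl).symm)
        rw [h1]; omega
    · obtain ⟨b1, hb1, b2, hb2, hbne⟩ := (Set.one_lt_ncard (Set.toFinite B)).mp (by omega)
      have hA2 : A.ncard ≤ 2 :=
        common_nbr_ncard b1 b2 hbne A
          (fun a ha => ⟨(hadj a ha b1 hb1).symm, (hadj a ha b2 hb2).symm⟩)
      calc A.ncard * B.ncard ≤ 2 * 2 := Nat.mul_le_mul hA2 hB2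
        _ = 4 := rfl
end

section
/- For all integers p, q ≥ 1, every biclique of the grid graph G_{p,q} that has at least one edge is either a subgraph of the star consisting of some vertex v together with all of its neighbors and the edges from v to them, or a subgraph of a 4-cycle of G_{p,q}. -/
lemma grid_adj_iff {p q : ℕ} {v w : Fin q × Fin p} :
    (gridGraph p q).Adj v w ↔
      Nat.dist (v.1 : ℕ) (w.1 : ℕ) + Nat.dist (v.2 : ℕ) (w.2 : ℕ) = 1 := Iff.rfl

lemma pair_eq_of_coords {p q : ℕ} {v w : Fin q × Fin p}
    (h1 : (v.1 : ℕ) = w.1) (h2 : (v.2 : ℕ) = w.2) : v = w :=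
  Prod.ext (Fin.val_injective h1) (Fin.val_injective h2)

lemma dist_arith {u v s t : ℕ} (h : Nat.dist u v + Nat.dist s t = 1) :
    (u = v + 1 ∨ v = u + 1) ∧ s = t ∨ u = v ∧ (s = t + 1 ∨ t = s + 1) := by
  simp only [Nat.dist] at h; omega

set_option maxHeartbeats 2000000 in
/-- Two distinct vertices of the grid have at most two common neighbors: if
`a`, `a2`, `x` are all common neighbors of `b ≠ b2` and `a ≠ a2`, then
`x = a` or `x = a2`. -/
lemma common_nbr {p q : ℕ} {a a2 b b2 x : Fin q × Fin p}
    (ha : a ≠ a2) (hb : b ≠ b2)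
    (h1 : (gridGraph p q).Adj a b) (h2 : (gridGraph p q).Adj a b2)
    (h3 : (gridGraph p q).Adj a2 b) (h4 : (gridGraph p q).Adj a2 b2)
    (h5 : (gridGraph p q).Adj x b) (h6 : (gridGraph p q).Adj x b2) :
    x = a ∨ x = a2 := by
  rw [grid_adj_iff] at h1 h2 h3 h4 h5 h6
  replace h1 := dist_arith h1
  replace h2 := dist_arith h2
  replace h3 := dist_arith h3
  replace h4 := dist_arith h4
  replace h5 := dist_arith h5
  replace h6 := dist_arith h6
  have ha' : ¬(((a.1 : ℕ) = a2.1) ∧ ((a.2 : ℕ) = a2.2)) := by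
    rintro ⟨u, v⟩; exact ha (pair_eq_of_coords u v)
  have hb' : ¬(((b.1 : ℕ) = b2.1) ∧ ((b.2 : ℕ) = b2.2)) := by
    rintro ⟨u, v⟩; exact hb (pair_eq_of_coords u v)
  have : (((x.1 : ℕ) = a.1) ∧ ((x.2 : ℕ) = a.2)) ∨
      (((x.1 : ℕ) = a2.1) ∧ ((x.2 : ℕ) = a2.2)) := by omega
  rcases this with ⟨u, v⟩ | ⟨u, v⟩
  · exact Or.inl (pair_eq_of_coords u v)
  · exact Or.inr (pair_eq_of_coords u v)

lemma grid_biclique_aux (p q : ℕ) (H : SimpleGraph (Fin q × Fin p))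
    (hle : H ≤ gridGraph p q) (A B : Set (Fin q × Fin p))
    (hAB : ∀ v w, H.Adj v w ↔ (v ∈ A ∧ w ∈ B) ∨ (v ∈ B ∧ w ∈ A))
    (a : Fin q × Fin p) (ha : a ∈ A) (b : Fin q × Fin p) (hb : b ∈ B) :
    (∃ v : Fin q × Fin p, ∀ e ∈ H.edgeSet, v ∈ e) ∨
    (∃ a b c d : Fin q × Fin p, a ≠ c ∧ b ≠ d ∧
      (gridGraph p q).Adj a b ∧ (gridGraph p q).Adj b c ∧
      (gridGraph p q).Adj c d ∧ (gridGraph p q).Adj d a ∧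
      ∀ e ∈ H.edgeSet, e = s(a, b) ∨ e = s(b, c) ∨ e = s(c, d) ∨ e = s(d, a)) := by
  have hadj : ∀ x ∈ A, ∀ y ∈ B, (gridGraph p q).Adj x y :=
    fun x hx y hy => hle ((hAB x y).2 (Or.inl ⟨hx, hy⟩))
  by_cases hA : ∀ a' ∈ A, a' = a
  · left
    refine ⟨a, fun e he => ?_⟩
    induction e using Sym2.ind with
    | _ x y =>
      rw [SimpleGraph.mem_edgeSet] at he
      rcases (hAB x y).1 he with ⟨hx, _⟩ | ⟨_, hy⟩
      · exact Sym2.mem_iff.2 (Or.inl (hA x hx).symm)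
      · exact Sym2.mem_iff.2 (Or.inr (hA y hy).symm)
  · push_neg at hA
    obtain ⟨a2, ha2, ha2ne⟩ := hA
    by_cases hB : ∀ b' ∈ B, b' = b
    · left
      refine ⟨b, fun e he => ?_⟩
      induction e using Sym2.ind with
      | _ x y =>
        rw [SimpleGraph.mem_edgeSet] at he
        rcases (hAB x y).1 he with ⟨_, hy⟩ | ⟨hx, _⟩
        · exact Sym2.mem_iff.2 (Or.inr (hB y hy).symm)
        · exact Sym2.mem_iff.2 (Or.inl (hB x hx).symm)
    · push_neg at hB
      obtain ⟨b2, hb2, hb2ne⟩ := hB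
      right
      have g1 := hadj a ha b hb
      have g2 := hadj a ha b2 hb2
      have g3 := hadj a2 ha2 b hb
      have g4 := hadj a2 ha2 b2 hb2
      refine ⟨a, b, a2, b2, Ne.symm ha2ne, Ne.symm hb2ne, g1, g3.symm, g4, g2.symm,
        fun e he => ?_⟩
      induction e using Sym2.ind with
      | _ x y =>
        rw [SimpleGraph.mem_edgeSet] at he
        have key : (x ∈ A ∧ y ∈ B) ∨ (x ∈ B ∧ y ∈ A) := (hAB x y).1 he
        have main : ((x = a ∨ x = a2) ∧ (y = b ∨ y = b2)) ∨
            ((x = b ∨ x = b2) ∧ (y = a ∨ y = a2)) := by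
          rcases key with ⟨hx, hy⟩ | ⟨hx, hy⟩
          · exact Or.inl ⟨common_nbr (Ne.symm ha2ne) (Ne.symm hb2ne) g1 g2 g3 g4
              (hadj x hx b hb) (hadj x hx b2 hb2),
              common_nbr (Ne.symm hb2ne) (Ne.symm ha2ne) g1.symm g3.symm g2.symm g4.symm
              (hadj a ha y hy).symm (hadj a2 ha2 y hy).symm⟩
          · exact Or.inr ⟨common_nbr (Ne.symm hb2ne) (Ne.symm ha2ne) g1.symm g3.symm g2.symm g4.symm
              (hadj a ha x hx).symm (hadj a2 ha2 x hx).symm,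
              common_nbr (Ne.symm ha2ne) (Ne.symm hb2ne) g1 g2 g3 g4
              (hadj y hy b hb) (hadj y hy b2 hb2)⟩
        rcases main with ⟨hx | hx, hy | hy⟩ | ⟨hx | hx, hy | hy⟩ <;>
          subst hx <;> subst hy <;> simp [Sym2.eq_swap]

theorem grid_biclique_star_or_square (p q : ℕ) (hp : 1 ≤ p) (hq : 1 ≤ q)
    (H : SimpleGraph (Fin q × Fin p)) (hH : IsBiclique (gridGraph p q) H)
    (hne : H.edgeSet.Nonempty) :
    (∃ v : Fin q × Fin p, ∀ e ∈ H.edgeSet, v ∈ e) ∨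
    (∃ a b c d : Fin q × Fin p, a ≠ c ∧ b ≠ d ∧
      (gridGraph p q).Adj a b ∧ (gridGraph p q).Adj b c ∧
      (gridGraph p q).Adj c d ∧ (gridGraph p q).Adj d a ∧
      ∀ e ∈ H.edgeSet, e = s(a, b) ∨ e = s(b, c) ∨ e = s(c, d) ∨ e = s(d, a)) := by
  obtain ⟨hle, A, B, hAB⟩ := hH
  obtain ⟨e, he⟩ := hne
  induction e using Sym2.ind with
  | _ v w =>
    rw [SimpleGraph.mem_edgeSet] at he
    rcases (hAB v w).1 he with ⟨hv, hw⟩ | ⟨hv, hw⟩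
    · exact grid_biclique_aux p q H hle A B hAB v hv w hw
    · exact grid_biclique_aux p q H hle B A (fun x y => (hAB x y).trans or_comm) v hv w hw
end

section
/- Let p, q be integers with 2 ≤ p ≤ q, and let C be a finite collection of bicliques of the grid graph G_{p,q} whose edge sets cover all edges of G_{p,q}. Then there exists a collection C' of bicliques of G_{p,q} covering all edges of G_{p,q} with |C'| ≤ |C| such that: (i) any two stars in C' that each contain an edge of the outer cycle are edge-disjoint, and (ii) no edge of G_{p,q} is contained both in a 4-cycle of C' containing an edge of the outer cycle and in a star of C' containing an edge of the outer cycle. -/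
/-- A vertex of `G_{p,q}` lying on the outer boundary. -/
def OnBoundary (p q : ℕ) (v : Fin q × Fin p) : Prop :=
  (v.1 : ℕ) = 0 ∨ (v.1 : ℕ) = q - 1 ∨ (v.2 : ℕ) = 0 ∨ (v.2 : ℕ) = p - 1

/-- An edge of the outer cycle of `G_{p,q}`: an edge of the grid both of whose
endpoints lie on the boundary. -/
def OuterEdge (p q : ℕ) (e : Sym2 (Fin q × Fin p)) : Prop :=
  e ∈ (gridGraph p q).edgeSet ∧ ∀ v ∈ e, OnBoundary p q v

/-- A star: a graph with at least one edge, all of whose edges share a common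
vertex (the centre); such a biclique is isomorphic to some `K_{1,n}`, `n ≥ 1`. -/
def IsStar {V : Type*} (H : SimpleGraph V) : Prop :=
  H.edgeSet.Nonempty ∧ ∃ v, ∀ e ∈ H.edgeSet, v ∈ e

/-- A 4-cycle: a graph whose edge set consists precisely of the four edges of a
cycle on four distinct vertices; such a biclique is isomorphic to `K_{2,2}`. -/
def IsC4 {V : Type*} (H : SimpleGraph V) : Prop :=
  ∃ a b c d : V, a ≠ c ∧ b ≠ d ∧
    H.edgeSet = {s(a, b), s(b, c), s(c, d), s(d, a)}

/-- A star with an outer edge. -/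
def SWO (p q : ℕ) (H : SimpleGraph (Fin q × Fin p)) : Prop :=
  IsStar H ∧ ∃ e ∈ H.edgeSet, OuterEdge p q e

/-- Edges covered by some 4-cycle of `C` containing an outer edge. -/
def BadE (p q : ℕ) (C : Finset (SimpleGraph (Fin q × Fin p)))
    (e : Sym2 (Fin q × Fin p)) : Prop :=
  ∃ H ∈ C, (IsC4 H ∧ ∃ f ∈ H.edgeSet, OuterEdge p q f) ∧ e ∈ H.edgeSet

open Classical in
/-- A choice of a star-with-outer-edge of `C` covering `e`, if one exists. -/
noncomputable def pick (p q : ℕ) (C : Finset (SimpleGraph (Fin q × Fin p)))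
    (e : Sym2 (Fin q × Fin p)) : SimpleGraph (Fin q × Fin p) :=
  if h : ∃ H ∈ C, SWO p q H ∧ e ∈ H.edgeSet then h.choose else ⊥

lemma pick_spec {p q : ℕ} {C : Finset (SimpleGraph (Fin q × Fin p))}
    {e : Sym2 (Fin q × Fin p)} (h : ∃ H ∈ C, SWO p q H ∧ e ∈ H.edgeSet) :
    pick p q C e ∈ C ∧ SWO p q (pick p q C e) ∧ e ∈ (pick p q C e).edgeSet := by
  rw [pick, dif_pos h]
  exact ⟨h.choose_spec.1, h.choose_spec.2⟩

/-- The trimmed version of a star `S`. -/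
noncomputable def trim (p q : ℕ) (C : Finset (SimpleGraph (Fin q × Fin p)))
    (S : SimpleGraph (Fin q × Fin p)) : SimpleGraph (Fin q × Fin p) where
  Adj v w := S.Adj v w ∧ ¬ BadE p q C s(v, w) ∧ pick p q C s(v, w) = S
  symm := by
    constructor
    intro v w ⟨h1, h2, h3⟩
    rw [Sym2.eq_swap] at h2 h3
    exact ⟨h1.symm, h2, h3⟩
  loopless := ⟨fun v h => S.irrefl h.1⟩

lemma trim_edge {p q : ℕ} {C : Finset (SimpleGraph (Fin q × Fin p))}
    {S : SimpleGraph (Fin q × Fin p)} (e : Sym2 (Fin q × Fin p)) :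
    e ∈ (trim p q C S).edgeSet ↔
      e ∈ S.edgeSet ∧ ¬ BadE p q C e ∧ pick p q C e = S := by
  induction e using Sym2.ind with
  | _ v w => simp [SimpleGraph.mem_edgeSet, trim]

lemma c4_no_common {V : Type*} {H : SimpleGraph V} (hc4 : IsC4 H) (v : V)
    (hv : ∀ e ∈ H.edgeSet, v ∈ e) : False := by
  obtain ⟨a, b, c, d, hac, hbd, hset⟩ := hc4
  have hab : s(a, b) ∈ H.edgeSet := by rw [hset]; simp
  have hbc : s(b, c) ∈ H.edgeSet := by rw [hset]; simp
  have hcd : s(c, d) ∈ H.edgeSet := by rw [hset]; simp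
  have hda : s(d, a) ∈ H.edgeSet := by rw [hset]; simp
  have nab : a ≠ b := (H.mem_edgeSet.mp hab).ne
  have nbc : b ≠ c := (H.mem_edgeSet.mp hbc).ne
  have ncd : c ≠ d := (H.mem_edgeSet.mp hcd).ne
  have nda : d ≠ a := (H.mem_edgeSet.mp hda).ne
  have h1 := Sym2.mem_iff.mp (hv _ hab)
  have h2 := Sym2.mem_iff.mp (hv _ hbc)
  have h3 := Sym2.mem_iff.mp (hv _ hcd)
  have h4 := Sym2.mem_iff.mp (hv _ hda)
  rcases h1 with rfl | rfl <;> rcases h3 with rfl | rfl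
  · exact hac rfl
  · rcases h2 with rfl | rfl
    · exact nab rfl
    · exact hac rfl
  · rcases h4 with rfl | rfl
    · exact hbd rfl
    · exact nab rfl
  · exact hbd rfl

lemma c4_not_star {V : Type*} {H : SimpleGraph V} (hc4 : IsC4 H)
    (hs : IsStar H) : False := by
  obtain ⟨_, v, hv⟩ := hs
  exact c4_no_common hc4 v hv

theorem cover_normalization (p q : ℕ) (hp : 2 ≤ p) (hpq : p ≤ q)
    (C : Finset (SimpleGraph (Fin q × Fin p)))
    (hC : ∀ H ∈ C, IsBiclique (gridGraph p q) H)
    (hcov : ∀ e ∈ (gridGraph p q).edgeSet, ∃ H ∈ C, e ∈ H.edgeSet) :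
    ∃ C' : Finset (SimpleGraph (Fin q × Fin p)),
      (∀ H ∈ C', IsBiclique (gridGraph p q) H) ∧
      (∀ e ∈ (gridGraph p q).edgeSet, ∃ H ∈ C', e ∈ H.edgeSet) ∧
      C'.card ≤ C.card ∧
      (∀ H₁ ∈ C', ∀ H₂ ∈ C', H₁ ≠ H₂ →
        IsStar H₁ → (∃ e ∈ H₁.edgeSet, OuterEdge p q e) →
        IsStar H₂ → (∃ e ∈ H₂.edgeSet, OuterEdge p q e) →
        Disjoint H₁.edgeSet H₂.edgeSet) ∧
      (∀ H₁ ∈ C', ∀ H₂ ∈ C',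
        IsC4 H₁ → (∃ e ∈ H₁.edgeSet, OuterEdge p q e) →
        IsStar H₂ → (∃ e ∈ H₂.edgeSet, OuterEdge p q e) →
        Disjoint H₁.edgeSet H₂.edgeSet) := by
  classical
  set Csw : Finset (SimpleGraph (Fin q × Fin p)) := C.filter (SWO p q) with hCsw
  set Ck : Finset (SimpleGraph (Fin q × Fin p)) := C.filter (fun H => ¬ SWO p q H) with hCk
  refine ⟨Ck ∪ Csw.image (trim p q C), ?_, ?_, ?_, ?_, ?_⟩
  · -- bicliques
    intro H hH
    rcases Finset.mem_union.mp hH with h | h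
    · exact hC H (Finset.mem_filter.mp h).1
    · obtain ⟨S, hS, rfl⟩ := Finset.mem_image.mp h
      have hS' := Finset.mem_filter.mp hS
      obtain ⟨⟨_, v, hv⟩, _⟩ := hS'.2
      have hble := hC S hS'.1
      constructor
      · intro x y hxy
        exact hble.1 (show S.Adj x y ∧ _ from hxy).1
      · refine ⟨{v}, {w | (trim p q C S).Adj v w}, fun x y => ?_⟩
        constructor
        · intro hxy
          have hmem : v ∈ s(x, y) := hv _ (S.mem_edgeSet.mpr (show S.Adj x y ∧ _ from hxy).1)
          rcases Sym2.mem_iff.mp hmem with rfl | rfl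
          · exact Or.inl ⟨rfl, hxy⟩
          · exact Or.inr ⟨hxy.symm, rfl⟩
        · rintro (⟨rfl, hy⟩ | ⟨hx, rfl⟩)
          · exact hy
          · exact hx.symm
  · -- covering
    intro e he
    obtain ⟨H, hH, heH⟩ := hcov e he
    by_cases hsw : SWO p q H
    · by_cases hbad : BadE p q C e
      · obtain ⟨H', hH', hc4o, heH'⟩ := hbad
        refine ⟨H', Finset.mem_union_left _ ?_, heH'⟩
        exact Finset.mem_filter.mpr ⟨hH', fun hsw' => c4_not_star hc4o.1 hsw'.1⟩
      · have hex : ∃ H ∈ C, SWO p q H ∧ e ∈ H.edgeSet := ⟨H, hH, hsw, heH⟩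
        obtain ⟨hp1, hp2, hp3⟩ := pick_spec hex
        refine ⟨trim p q C (pick p q C e), Finset.mem_union_right _ ?_, ?_⟩
        · exact Finset.mem_image_of_mem _ (Finset.mem_filter.mpr ⟨hp1, hp2⟩)
        · exact (trim_edge e).mpr ⟨hp3, hbad, rfl⟩
    · exact ⟨H, Finset.mem_union_left _ (Finset.mem_filter.mpr ⟨hH, hsw⟩), heH⟩
  · -- cardinality
    calc (Ck ∪ Csw.image (trim p q C)).card
        ≤ Ck.card + (Csw.image (trim p q C)).card := Finset.card_union_le _ _
      _ ≤ Ck.card + Csw.card := by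
          exact Nat.add_le_add_left (Finset.card_image_le) _
      _ = C.card := by
          rw [hCk, hCsw, Nat.add_comm]
          exact Finset.card_filter_add_card_filter_not _
  · -- stars pairwise disjoint
    intro H₁ hH₁ H₂ hH₂ hne hs₁ ho₁ hs₂ ho₂
    have key : ∀ H ∈ Ck ∪ Csw.image (trim p q C), IsStar H →
        (∃ e ∈ H.edgeSet, OuterEdge p q e) → ∃ S, H = trim p q C S := by
      intro H hH hs ho
      rcases Finset.mem_union.mp hH with h | h
      · exact absurd ⟨hs, ho⟩ (Finset.mem_filter.mp h).2
      · obtain ⟨S, _, rfl⟩ := Finset.mem_image.mp h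
        exact ⟨S, rfl⟩
    obtain ⟨S₁, rfl⟩ := key H₁ hH₁ hs₁ ho₁
    obtain ⟨S₂, rfl⟩ := key H₂ hH₂ hs₂ ho₂
    rw [Set.disjoint_left]
    intro e he₁ he₂
    have h1 := (trim_edge e).mp he₁
    have h2 := (trim_edge e).mp he₂
    exact hne (by rw [← h1.2.2, ← h2.2.2])
  · -- C4s disjoint from stars
    intro H₁ hH₁ H₂ hH₂ hc4 ho₁ hs₂ ho₂
    -- H₁ must be a kept element of C
    have hH₁C : H₁ ∈ C := by
      rcases Finset.mem_union.mp hH₁ with h | h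
      · exact (Finset.mem_filter.mp h).1
      · obtain ⟨S, hS, rfl⟩ := Finset.mem_image.mp h
        obtain ⟨⟨_, v, hv⟩, _⟩ := (Finset.mem_filter.mp hS).2
        exact absurd (fun e he => hv e ((trim_edge e).mp he).1) (c4_no_common hc4 v)
    -- H₂ is a trimmed star
    have hH₂t : ∃ S, H₂ = trim p q C S := by
      rcases Finset.mem_union.mp hH₂ with h | h
      · exact absurd ⟨hs₂, ho₂⟩ (Finset.mem_filter.mp h).2
      · obtain ⟨S, _, rfl⟩ := Finset.mem_image.mp h
        exact ⟨S, rfl⟩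
    obtain ⟨S, rfl⟩ := hH₂t
    rw [Set.disjoint_left]
    intro e he₁ he₂
    exact ((trim_edge e).mp he₂).2.1 ⟨H₁, hH₁C, ⟨hc4, ho₁⟩, he₁⟩
end

section
/- For every even integer p ≥ 2, the biclique covering number of the square grid graph G_{p,p} equals p²/2 − 1. -/
/-! ### Auxiliary material -/

instance (p q : ℕ) : DecidableRel (gridGraph p q).Adj :=
  fun _ _ => instDecidableEqNat _ _

/-- complete bipartite graph between two finsets -/
def pairG {V : Type*} [DecidableEq V] (A B : Finset V) : SimpleGraph V where
  Adj v w := ((v ∈ A ∧ w ∈ B) ∨ (w ∈ A ∧ v ∈ B)) ∧ v ≠ w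
  symm := by constructor; intro v w h; exact ⟨h.1.symm, h.2.symm⟩
  loopless := by constructor; intro v h; exact h.2 rfl

lemma pairG_adj {V : Type*} [DecidableEq V] (A B : Finset V) (v w : V) :
    (pairG A B).Adj v w ↔ (((v ∈ A ∧ w ∈ B) ∨ (w ∈ A ∧ v ∈ B)) ∧ v ≠ w) := Iff.rfl

lemma pairG_isBiclique {V : Type*} [DecidableEq V] {G : SimpleGraph V} {A B : Finset V}
    (h : ∀ a ∈ A, ∀ b ∈ B, G.Adj a b) : IsBiclique G (pairG A B) := by
  have hd : ∀ v, v ∈ A → v ∈ B → False := by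
    intro v hA hB; exact (G.loopless.irrefl v) (h v hA v hB)
  constructor
  · intro v w hvw
    rcases hvw.1 with ⟨h1, h2⟩ | ⟨h1, h2⟩
    · exact h v h1 w h2
    · exact (h w h1 v h2).symm
  · refine ⟨(A : Set V), (B : Set V), fun v w => ?_⟩
    simp only [Finset.coe_mem, Set.mem_setOf_eq, Finset.mem_coe]
    constructor
    · intro hvw; rcases hvw.1 with ⟨h1, h2⟩ | ⟨h1, h2⟩
      · exact Or.inl ⟨h1, h2⟩
      · exact Or.inr ⟨h2, h1⟩
    · rintro (⟨h1, h2⟩ | ⟨h1, h2⟩)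
      · refine ⟨Or.inl ⟨h1, h2⟩, ?_⟩
        rintro rfl; exact hd v h1 h2
      · refine ⟨Or.inr ⟨h2, h1⟩, ?_⟩
        rintro rfl; exact hd v h2 h1

lemma cross_of_common {V : Type*} {G H : SimpleGraph V} (hB : IsBiclique G H)
    {u v x y : V} (h1 : H.Adj u v) (h2 : H.Adj x y) :
    (G.Adj u x ∧ G.Adj v y) ∨ (G.Adj u y ∧ G.Adj v x) := by
  obtain ⟨hle, A, B, hiff⟩ := hB
  have adj : ∀ a b : V, (a ∈ A ∧ b ∈ B) ∨ (a ∈ B ∧ b ∈ A) → G.Adj a b := by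
    intro a b hab; exact hle ((hiff a b).2 hab)
  rcases (hiff u v).1 h1 with ⟨hu, hv⟩ | ⟨hu, hv⟩ <;>
    rcases (hiff x y).1 h2 with ⟨hx, hy⟩ | ⟨hx, hy⟩
  · exact Or.inr ⟨adj u y (Or.inl ⟨hu, hy⟩), adj v x (Or.inr ⟨hv, hx⟩)⟩
  · exact Or.inl ⟨adj u x (Or.inl ⟨hu, hx⟩), adj v y (Or.inr ⟨hv, hy⟩)⟩
  · exact Or.inl ⟨adj u x (Or.inr ⟨hu, hx⟩), adj v y (Or.inl ⟨hv, hy⟩)⟩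
  · exact Or.inr ⟨adj u y (Or.inr ⟨hu, hy⟩), adj v x (Or.inl ⟨hv, hx⟩)⟩

/-! ### Arithmetic predicates for the fooling set -/

def PH (p x y : ℕ) : Prop :=
  x ≤ p - 1 ∧ y + 2 ≤ p ∧
  min x (p - 1 - x) ≤ y ∧ y + 1 ≤ p - 1 - min x (p - 1 - x) ∧
  y % 2 = (min x (p - 1 - x)) % 2 ∧ 2 * x ≠ p

def PV (p x y : ℕ) : Prop :=
  x + 2 ≤ p ∧ y ≤ p - 1 ∧
  min y (p - 1 - y) + 1 ≤ x ∧ x + 2 ≤ p - 1 - min y (p - 1 - y) ∧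
  x % 2 = (min y (p - 1 - y) + 1) % 2

set_option maxHeartbeats 2000000 in
lemma noHH {p x y x' y' : ℕ} (h : PH p x y) (h' : PH p x' y')
    (hne : ¬(x = x' ∧ y = y'))
    (cross : (Nat.dist x x' + Nat.dist y y' = 1 ∧ Nat.dist x x' + Nat.dist (y+1) (y'+1) = 1) ∨
             (Nat.dist x x' + Nat.dist y (y'+1) = 1 ∧ Nat.dist x x' + Nat.dist (y+1) y' = 1)) :
    False := by
  obtain ⟨a1, a2, a3, a4, a5, a6⟩ := h
  obtain ⟨b1, b2, b3, b4, b5, b6⟩ := h'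
  simp only [Nat.dist] at cross
  rcases Nat.le_total x (p - 1 - x) with hx | hx <;>
    rcases Nat.le_total x' (p - 1 - x') with hx' | hx' <;>
      simp only [min_eq_left, min_eq_right, hx, hx'] at a3 a4 a5 b3 b4 b5 <;> omega

set_option maxHeartbeats 2000000 in
lemma noVV {p x y x' y' : ℕ} (h : PV p x y) (h' : PV p x' y')
    (hne : ¬(x = x' ∧ y = y'))
    (cross : (Nat.dist x x' + Nat.dist y y' = 1 ∧ Nat.dist (x+1) (x'+1) + Nat.dist y y' = 1) ∨
             (Nat.dist x (x'+1) + Nat.dist y y' = 1 ∧ Nat.dist (x+1) x' + Nat.dist y y' = 1)) :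
    False := by
  obtain ⟨a1, a2, a3, a4, a5⟩ := h
  obtain ⟨b1, b2, b3, b4, b5⟩ := h'
  simp only [Nat.dist] at cross
  rcases Nat.le_total y (p - 1 - y) with hy | hy <;>
    rcases Nat.le_total y' (p - 1 - y') with hy' | hy' <;>
      simp only [min_eq_left, min_eq_right, hy, hy'] at a3 a4 a5 b3 b4 b5 <;> omega

set_option maxHeartbeats 2000000 in
lemma noHV {p x y x' y' : ℕ} (hp : p % 2 = 0) (h : PH p x y) (h' : PV p x' y')
    (cross : (Nat.dist x x' + Nat.dist y y' = 1 ∧ Nat.dist x (x'+1) + Nat.dist (y+1) y' = 1) ∨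
             (Nat.dist x (x'+1) + Nat.dist y y' = 1 ∧ Nat.dist x x' + Nat.dist (y+1) y' = 1)) :
    False := by
  obtain ⟨a1, a2, a3, a4, a5, a6⟩ := h
  obtain ⟨b1, b2, b3, b4, b5⟩ := h'
  simp only [Nat.dist] at cross
  rcases Nat.le_total x (p - 1 - x) with hx | hx <;>
    rcases Nat.le_total y' (p - 1 - y') with hy' | hy' <;>
      simp only [min_eq_left, min_eq_right, hx, hy'] at a3 a4 a5 b3 b4 b5 <;> omega

/-! ### The fooling-set matching, ring by ring -/

def ringSize (k : ℕ) : ℕ := if k = 0 then 1 else 4 * k + 2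

lemma ringSize_succ (m : ℕ) : ringSize (m + 1) = 4 * (m + 1) + 2 := by
  unfold ringSize; rw [if_neg (Nat.succ_ne_zero m)]

lemma ringSize_sum (n : ℕ) :
    ∑ k ∈ Finset.range (n + 1), ringSize k = 2 * (n + 1) * (n + 1) - 1 := by
  induction n with
  | zero => simp [ringSize]
  | succ m ih =>
    rw [Finset.sum_range_succ, ih, ringSize_succ]
    have h1 : 2 * (m + 1 + 1) * (m + 1 + 1) = 2 * (m + 1) * (m + 1) + (4 * (m + 1) + 2) := by
      ring
    rw [h1, Nat.sub_add_comm (by nlinarith)]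

lemma card_index (r : ℕ) (hr : 1 ≤ r) :
    Fintype.card ((k : Fin r) × Fin (ringSize k.val)) = 2 * r * r - 1 := by
  rw [Fintype.card_sigma]
  simp only [Fintype.card_fin]
  rw [Fin.sum_univ_eq_sum_range (fun k => ringSize k) r]
  obtain ⟨m, rfl⟩ : ∃ m, r = m + 1 := ⟨r - 1, by omega⟩
  exact ringSize_sum m

def encRoot (r k t : ℕ) : ℕ × ℕ × Bool :=
  if k = 0 then (r - 1, r - 1, true)
  else if t < k + 1 then (r - 1 - k, (r - 1 - k) + 2 * t, true)
  else if t < 2 * k + 2 then (r + k, (r - 1 - k) + 2 * (t - (k + 1)), true)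
  else if t < 3 * k + 2 then ((r - 1 - k) + 1 + 2 * (t - (2 * k + 2)), r + k, false)
  else ((r - 1 - k) + 1 + 2 * (t - (3 * k + 2)), r - 1 - k, false)

lemma encRoot_spec {r k t : ℕ} (hr : 1 ≤ r) (hk : k < r) (ht : t < ringSize k) :
    ((encRoot r k t).2.2 = true → PH (2 * r) (encRoot r k t).1 (encRoot r k t).2.1) ∧
    ((encRoot r k t).2.2 = false → PV (2 * r) (encRoot r k t).1 (encRoot r k t).2.1) := by
  unfold encRoot PH PV
  unfold ringSize at ht
  split_ifs at ht ⊢ with h0 h1 h2 h3 <;>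
    simp only [Prod.fst, Prod.snd]
  · refine ⟨fun _ => ?_, fun hb => by simp at hb⟩
    have hm : min (r - 1) (2 * r - 1 - (r - 1)) = r - 1 := by omega
    refine ⟨by omega, by omega, by omega, by omega, by rw [hm], by omega⟩
  · refine ⟨fun _ => ?_, fun hb => by simp at hb⟩
    have hm : min (r - 1 - k) (2 * r - 1 - (r - 1 - k)) = r - 1 - k := by omega
    refine ⟨by omega, by omega, by omega, by omega, by rw [hm]; omega, by omega⟩
  · refine ⟨fun _ => ?_, fun hb => by simp at hb⟩
    have hm : min (r + k) (2 * r - 1 - (r + k)) = r - 1 - k := by omega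
    refine ⟨by omega, by omega, by omega, by omega, by rw [hm]; omega, by omega⟩
  · refine ⟨fun hb => by simp at hb, fun _ => ?_⟩
    have hm : min (r + k) (2 * r - 1 - (r + k)) = r - 1 - k := by omega
    refine ⟨by omega, by omega, by omega, by omega, by rw [hm]; omega⟩
  · refine ⟨fun hb => by simp at hb, fun _ => ?_⟩
    have hm : min (r - 1 - k) (2 * r - 1 - (r - 1 - k)) = r - 1 - k := by omega
    refine ⟨by omega, by omega, by omega, by omega, by rw [hm]; omega⟩

set_option maxHeartbeats 1000000 in
lemma encRoot_inj {r k t k' t' : ℕ} (hr : 1 ≤ r) (hk : k < r) (ht : t < ringSize k)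
    (hk' : k' < r) (ht' : t' < ringSize k')
    (h : encRoot r k t = encRoot r k' t') : k = k' ∧ t = t' := by
  unfold encRoot at h
  unfold ringSize at ht ht'
  split_ifs at ht ht' h <;>
    simp only [Prod.mk.injEq] at h <;> omega

/-! ### Vertices and basic graph pieces -/

def vtx (p : ℕ) (hp : 0 < p) (x y : ℕ) : Fin p × Fin p :=
  (⟨x % p, Nat.mod_lt _ hp⟩, ⟨y % p, Nat.mod_lt _ hp⟩)

lemma vtx_fst (p : ℕ) (hp : 0 < p) (x y : ℕ) (hx : x < p) :
    ((vtx p hp x y).1 : ℕ) = x := Nat.mod_eq_of_lt hx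

lemma vtx_snd (p : ℕ) (hp : 0 < p) (x y : ℕ) (hy : y < p) :
    ((vtx p hp x y).2 : ℕ) = y := Nat.mod_eq_of_lt hy

lemma vtx_eq (p : ℕ) (hp : 0 < p) (u : Fin p × Fin p) :
    vtx p hp (u.1 : ℕ) (u.2 : ℕ) = u := by
  cases u with
  | mk a b =>
    unfold vtx
    simp [Nat.mod_eq_of_lt a.isLt, Nat.mod_eq_of_lt b.isLt, Fin.ext_iff]

lemma vtx_val (p : ℕ) (hp : 0 < p) (x y : ℕ) (hx : x < p) (hy : y < p) :
    vtx p hp x y = (⟨x, hx⟩, ⟨y, hy⟩) := by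
  unfold vtx
  simp [Fin.ext_iff, Nat.mod_eq_of_lt hx, Nat.mod_eq_of_lt hy]

lemma vtx_eq_mk {p : ℕ} (hp : 0 < p) {x y a b : ℕ} (ha : a < p) (hb : b < p)
    (h1 : x = a) (h2 : y = b) : vtx p hp x y = (⟨a, ha⟩, ⟨b, hb⟩) := by
  rw [h1, h2]; exact vtx_val p hp a b ha hb

lemma vtx_adj (p : ℕ) (hp : 0 < p) {x y x' y' : ℕ}
    (hx : x < p) (hy : y < p) (hx' : x' < p) (hy' : y' < p)
    (h : Nat.dist x x' + Nat.dist y y' = 1) :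
    (gridGraph p p).Adj (vtx p hp x y) (vtx p hp x' y') := by
  show Nat.dist _ _ + Nat.dist _ _ = 1
  rw [vtx_fst p hp x y hx, vtx_snd p hp x y hy, vtx_fst p hp x' y' hx',
    vtx_snd p hp x' y' hy']
  exact h

lemma adj_dist {p : ℕ} {u v : Fin p × Fin p} (h : (gridGraph p p).Adj u v) :
    Nat.dist (u.1 : ℕ) (v.1 : ℕ) + Nat.dist (u.2 : ℕ) (v.2 : ℕ) = 1 := h

/-- the unit-cell biclique with lower-left corner in column `i` on the
anti-diagonal -/
def cellB (p : ℕ) (hp : 0 < p) (i : ℕ) : SimpleGraph (Fin p × Fin p) :=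
  pairG {vtx p hp i (p - 2 - i), vtx p hp (i + 1) (p - 1 - i)}
        {vtx p hp (i + 1) (p - 2 - i), vtx p hp i (p - 1 - i)}

/-- the star biclique centered at `w` -/
def starB (p : ℕ) (hp : 0 < p) (w : Fin p × Fin p) : SimpleGraph (Fin p × Fin p) :=
  pairG {w} ((gridGraph p p).neighborFinset w)

lemma starB_isBiclique (p : ℕ) (hp : 0 < p) (w : Fin p × Fin p) :
    IsBiclique (gridGraph p p) (starB p hp w) := by
  apply pairG_isBiclique
  intro a ha b hb
  rw [Finset.mem_singleton] at ha
  subst ha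
  exact (SimpleGraph.mem_neighborFinset _ _ _).1 hb

lemma starB_adj (p : ℕ) (hp : 0 < p) {w v : Fin p × Fin p}
    (h : (gridGraph p p).Adj w v) : (starB p hp w).Adj w v := by
  rw [starB, pairG_adj]
  exact ⟨Or.inl ⟨Finset.mem_singleton_self w,
    (SimpleGraph.mem_neighborFinset _ _ _).2 h⟩, h.ne⟩

lemma cellB_isBiclique (p : ℕ) (hp : 0 < p) (i : ℕ) (hi : i + 2 ≤ p) :
    IsBiclique (gridGraph p p) (cellB p hp i) := by
  apply pairG_isBiclique
  intro a ha b hb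
  simp only [Finset.mem_insert, Finset.mem_singleton] at ha hb
  rcases ha with rfl | rfl <;> rcases hb with rfl | rfl <;>
    (apply vtx_adj p hp (by omega) (by omega) (by omega) (by omega);
     simp only [Nat.dist]; omega)

/-! ### Cell membership lemmas -/

lemma cellL_v {p : ℕ} (hp : 0 < p) {x y : ℕ} (hs : x + y + 2 = p) :
    (cellB p hp x).Adj (vtx p hp x y) (vtx p hp (x + 1) y) := by
  rw [cellB, pairG_adj]
  have e1 : p - 2 - x = y := by omega
  have e2 : (vtx p hp x y) = vtx p hp x (p - 2 - x) := by rw [e1]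
  have e3 : (vtx p hp (x + 1) y) = vtx p hp (x + 1) (p - 2 - x) := by rw [e1]
  refine ⟨Or.inl ⟨?_, ?_⟩, ?_⟩
  · rw [e2]; exact Finset.mem_insert_self _ _
  · rw [e3]; exact Finset.mem_insert_self _ _
  · intro h
    have := congrArg (fun z => (z.1 : ℕ)) h
    rw [vtx_fst p hp x y (by omega), vtx_fst p hp (x+1) y (by omega)] at this
    omega

lemma cellL_h {p : ℕ} (hp : 0 < p) {x y : ℕ} (hs : x + y + 2 = p) :
    (cellB p hp x).Adj (vtx p hp x y) (vtx p hp x (y + 1)) := by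
  rw [cellB, pairG_adj]
  have e1 : p - 2 - x = y := by omega
  have e2 : p - 1 - x = y + 1 := by omega
  have m1 : (vtx p hp x y) ∈ ({vtx p hp x (p - 2 - x), vtx p hp (x + 1) (p - 1 - x)} :
      Finset (Fin p × Fin p)) := by rw [e1]; exact Finset.mem_insert_self _ _
  have m2 : (vtx p hp x (y + 1)) ∈ ({vtx p hp (x + 1) (p - 2 - x), vtx p hp x (p - 1 - x)} :
      Finset (Fin p × Fin p)) := by
    rw [e2]; exact Finset.mem_insert_of_mem (Finset.mem_singleton_self _)
  refine ⟨Or.inl ⟨m1, m2⟩, ?_⟩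
  · intro h
    have := congrArg (fun z => (z.2 : ℕ)) h
    rw [vtx_snd p hp x y (by omega), vtx_snd p hp x (y+1) (by omega)] at this
    omega

lemma cellU_v {p : ℕ} (hp : 0 < p) {x y : ℕ} (hs : x + y + 1 = p) (hy : 1 ≤ y)
    (hx : x + 1 < p) : (cellB p hp x).Adj (vtx p hp x y) (vtx p hp (x + 1) y) := by
  rw [cellB, pairG_adj]
  have e1 : p - 2 - x = y - 1 := by omega
  have e2 : p - 1 - x = y := by omega
  have m1 : (vtx p hp x y) ∈ ({vtx p hp (x + 1) (p - 2 - x), vtx p hp x (p - 1 - x)} :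
      Finset (Fin p × Fin p)) := by
    rw [e2]; exact Finset.mem_insert_of_mem (Finset.mem_singleton_self _)
  have m2 : (vtx p hp (x + 1) y) ∈ ({vtx p hp x (p - 2 - x), vtx p hp (x + 1) (p - 1 - x)} :
      Finset (Fin p × Fin p)) := by
    rw [e2]; exact Finset.mem_insert_of_mem (Finset.mem_singleton_self _)
  refine ⟨Or.inr ⟨m2, m1⟩, ?_⟩
  · intro h
    have := congrArg (fun z => (z.1 : ℕ)) h
    rw [vtx_fst p hp x y (by omega), vtx_fst p hp (x+1) y (by omega)] at this
    omega

lemma cellU_h {p : ℕ} (hp : 0 < p) {x y : ℕ} (hs : x + y + 1 = p) (hx : 1 ≤ x)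
    (hy : y + 1 < p) : (cellB p hp (x - 1)).Adj (vtx p hp x y) (vtx p hp x (y + 1)) := by
  rw [cellB, pairG_adj]
  have e1 : p - 2 - (x - 1) = y := by omega
  have e2 : p - 1 - (x - 1) = y + 1 := by omega
  have e3 : x - 1 + 1 = x := by omega
  have m1 : (vtx p hp x y) ∈
      ({vtx p hp (x - 1 + 1) (p - 2 - (x - 1)), vtx p hp (x - 1) (p - 1 - (x - 1))} :
      Finset (Fin p × Fin p)) := by
    rw [e1, e3]; exact Finset.mem_insert_self _ _
  have m2 : (vtx p hp x (y + 1)) ∈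
      ({vtx p hp (x - 1) (p - 2 - (x - 1)), vtx p hp (x - 1 + 1) (p - 1 - (x - 1))} :
      Finset (Fin p × Fin p)) := by
    rw [e2, e3]; exact Finset.mem_insert_of_mem (Finset.mem_singleton_self _)
  refine ⟨Or.inr ⟨m2, m1⟩, ?_⟩
  · intro h
    have := congrArg (fun z => (z.2 : ℕ)) h
    rw [vtx_snd p hp x y (by omega), vtx_snd p hp x (y+1) (by omega)] at this
    omega

/-! ### The covering family -/

def starCol (p a s : ℕ) : ℕ :=
  if 2 * s + (a + 1) % 2 + 1 + a < p then 2 * s + (a + 1) % 2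
  else 2 * s + (a + 1) % 2 + 2

def coverFun (p r : ℕ) (hp : 0 < p) (i : ℕ) : SimpleGraph (Fin p × Fin p) :=
  if i < p - 1 then cellB p hp i
  else starB p hp
    (vtx p hp ((i - (p - 1)) / (r - 1))
      (starCol p ((i - (p - 1)) / (r - 1)) ((i - (p - 1)) % (r - 1))))

lemma coverFun_isBiclique (p r : ℕ) (hp : 0 < p) (i : ℕ) :
    IsBiclique (gridGraph p p) (coverFun p r hp i) := by
  unfold coverFun
  split_ifs with h
  · exact cellB_isBiclique p hp i (by omega)
  · exact starB_isBiclique p hp _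

lemma star_decode (p r : ℕ) (hp : 0 < p) (hr : 2 ≤ r) (hpr : p = 2 * r)
    (a b : ℕ) (ha : a < p) (hb : b < p) (hodd : (a + b) % 2 = 1)
    (hnd : a + b ≠ p - 1) :
    ∃ i : ℕ, i < 2 * r * r - 1 ∧
      coverFun p r hp i = starB p hp (vtx p hp a b) := by
  obtain ⟨w, rfl⟩ : ∃ w, r = w + 2 := ⟨r - 2, by omega⟩
  have hq : (w + 2) - 1 = w + 1 := by omega
  have hbe : b % 2 = (a + 1) % 2 := by omega
  set t := b / 2 with hts
  have hbt : b = 2 * t + (a + 1) % 2 := by omega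
  have hcase : b + a + 1 < p ∨ p < a + b := by omega
  set s : ℕ := if b + a + 1 < p then t else t - 1 with hs
  have hslt : s < w + 1 := by
    rcases hcase with hc | hc
    · rw [hs, if_pos hc]; omega
    · rw [hs, if_neg (by omega)]; omega
  refine ⟨(p - 1) + (s + a * (w + 1)), ?_, ?_⟩
  · have hA : a * (w + 1) ≤ (2 * w + 3) * (w + 1) :=
      Nat.mul_le_mul_right (w + 1) (by omega)
    have e1 : (2 * w + 3) * (w + 1) = 2 * (w * w) + 5 * w + 3 := by ring
    have e2 : 2 * (w + 2) * (w + 2) = 2 * (w * w) + 8 * w + 8 := by ring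
    omega
  · have hge : ¬((p - 1) + (s + a * (w + 1)) < p - 1) := by omega
    unfold coverFun
    rw [if_neg hge]
    have hsub : (p - 1) + (s + a * (w + 1)) - (p - 1) = s + a * (w + 1) := by omega
    rw [hsub, hq]
    have hdiv : (s + a * (w + 1)) / (w + 1) = a := by
      rw [Nat.add_mul_div_right _ _ (by omega : 0 < w + 1), Nat.div_eq_of_lt hslt]
      omega
    have hmod : (s + a * (w + 1)) % (w + 1) = s := by
      rw [Nat.add_mul_mod_self_right, Nat.mod_eq_of_lt hslt]
    rw [hdiv, hmod]
    congr 1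
    have hcol : starCol p a s = b := by
      unfold starCol
      rcases hcase with hc | hc
      · have hcond : 2 * s + (a + 1) % 2 + 1 + a < p := by
          rw [hs, if_pos hc]; omega
        rw [if_pos hcond, hs, if_pos hc]
        omega
      · have hodd2 : p + 1 ≤ a + b := by
          rcases Nat.lt_or_ge (a + b) (p + 1) with h | h
          · exfalso
            have hab : a + b = p := by omega
            rw [hab] at hodd
            omega
          · exact h
        have ht1 : 1 ≤ t := by omega
        have hcond : ¬(2 * s + (a + 1) % 2 + 1 + a < p) := by
          rw [hs, if_neg (show ¬(b + a + 1 < p) by omega)]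
          omega
        rw [if_neg hcond, hs, if_neg (show ¬(b + a + 1 < p) by omega)]
        omega
    rw [hcol]

set_option maxHeartbeats 4000000 in
lemma coverage (p r : ℕ) (hp : 0 < p) (hr : 1 ≤ r) (hpr : p = 2 * r)
    (u v : Fin p × Fin p) (huv : (gridGraph p p).Adj u v) :
    ∃ i : ℕ, i < 2 * r * r - 1 ∧ (coverFun p r hp i).Adj u v := by
  obtain ⟨⟨x1, hb1⟩, ⟨x2, hb2⟩⟩ := u
  obtain ⟨⟨y1, hb3⟩, ⟨y2, hb4⟩⟩ := v
  have hd : Nat.dist x1 y1 + Nat.dist x2 y2 = 1 := huv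
  have hcell_lt : p - 1 ≤ 2 * r * r - 1 := by
    have : r ≤ r * r := Nat.le_mul_of_pos_left r (by omega)
    have h4 : 2 * r * r = 2 * (r * r) := by ring
    omega
  by_cases c1 : (x1 + x2) % 2 = 1 ∧ x1 + x2 ≠ p - 1
  · -- star at u
    have hr2 : 2 ≤ r := by
      rcases Nat.lt_or_ge r 2 with hcon | hcon
      · exfalso; interval_cases r <;> omega
      · exact hcon
    obtain ⟨i, hilt, hieq⟩ := star_decode p r hp hr2 hpr x1 x2 hb1 hb2 c1.1 c1.2
    refine ⟨i, hilt, ?_⟩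
    rw [hieq, vtx_val p hp x1 x2 hb1 hb2]
    exact starB_adj p hp huv
  · by_cases c2 : (y1 + y2) % 2 = 1 ∧ y1 + y2 ≠ p - 1
    · have hr2 : 2 ≤ r := by
        rcases Nat.lt_or_ge r 2 with hcon | hcon
        · exfalso; interval_cases r <;> omega
        · exact hcon
      obtain ⟨i, hilt, hieq⟩ := star_decode p r hp hr2 hpr y1 y2 hb3 hb4 c2.1 c2.2
      refine ⟨i, hilt, ?_⟩
      rw [hieq, vtx_val p hp y1 y2 hb3 hb4]
      exact (starB_adj p hp huv.symm).symm
    · -- cell cases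
      simp only [Nat.dist] at hd
      have hpe : p % 2 = 0 := by omega
      have hor : (y1 = x1 + 1 ∧ y2 = x2) ∨ (x1 = y1 + 1 ∧ y2 = x2) ∨
          (y1 = x1 ∧ y2 = x2 + 1) ∨ (y1 = x1 ∧ x2 = y2 + 1) := by omega
      have hkey : x1 + x2 = p - 1 ∨ y1 + y2 = p - 1 := by
        rcases hor with ⟨h1, h2⟩ | ⟨h1, h2⟩ | ⟨h1, h2⟩ | ⟨h1, h2⟩ <;> omega
      rcases hor with ⟨h1, h2⟩ | ⟨h1, h2⟩ | ⟨h1, h2⟩ | ⟨h1, h2⟩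
      · -- v = u + (1,0) : vertical, u lower
        rcases hkey with hk | hk
        · refine ⟨x1, by omega, ?_⟩
          unfold coverFun
          rw [if_pos (by omega)]
          have hadj := cellU_v hp (x := x1) (y := x2) (by omega) (by omega) (by omega)
          rwa [vtx_eq_mk hp hb1 hb2 rfl rfl,
            vtx_eq_mk hp hb3 hb4 (by omega) (by omega)] at hadj
        · refine ⟨x1, by omega, ?_⟩
          unfold coverFun
          rw [if_pos (by omega)]
          have hadj := cellL_v hp (x := x1) (y := x2) (by omega)
          rwa [vtx_eq_mk hp hb1 hb2 rfl rfl,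
            vtx_eq_mk hp hb3 hb4 (by omega) (by omega)] at hadj
      · -- u = v + (1,0) : vertical, v lower
        rcases hkey with hk | hk
        · refine ⟨y1, by omega, ?_⟩
          unfold coverFun
          rw [if_pos (by omega)]
          have hadj := cellL_v hp (x := y1) (y := y2) (by omega)
          rw [vtx_eq_mk hp hb3 hb4 rfl rfl,
            vtx_eq_mk hp hb1 hb2 (by omega) (by omega)] at hadj
          exact hadj.symm
        · refine ⟨y1, by omega, ?_⟩
          unfold coverFun
          rw [if_pos (by omega)]
          have hadj := cellU_v hp (x := y1) (y := y2) (by omega) (by omega) (by omega)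
          rw [vtx_eq_mk hp hb3 hb4 rfl rfl,
            vtx_eq_mk hp hb1 hb2 (by omega) (by omega)] at hadj
          exact hadj.symm
      · -- v = u + (0,1) : horizontal, u lower
        rcases hkey with hk | hk
        · refine ⟨x1 - 1, by omega, ?_⟩
          unfold coverFun
          rw [if_pos (by omega)]
          have hadj := cellU_h hp (x := x1) (y := x2) (by omega) (by omega) (by omega)
          rwa [vtx_eq_mk hp hb1 hb2 rfl rfl,
            vtx_eq_mk hp hb3 hb4 (by omega) (by omega)] at hadj
        · refine ⟨x1, by omega, ?_⟩
          unfold coverFun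
          rw [if_pos (by omega)]
          have hadj := cellL_h hp (x := x1) (y := x2) (by omega)
          rwa [vtx_eq_mk hp hb1 hb2 rfl rfl,
            vtx_eq_mk hp hb3 hb4 (by omega) (by omega)] at hadj
      · -- u = v + (0,1) : horizontal, v lower
        rcases hkey with hk | hk
        · refine ⟨y1, by omega, ?_⟩
          unfold coverFun
          rw [if_pos (by omega)]
          have hadj := cellL_h hp (x := y1) (y := y2) (by omega)
          rw [vtx_eq_mk hp hb3 hb4 rfl rfl,
            vtx_eq_mk hp hb1 hb2 (by omega) (by omega)] at hadj
          exact hadj.symm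
        · refine ⟨y1 - 1, by omega, ?_⟩
          unfold coverFun
          rw [if_pos (by omega)]
          have hadj := cellU_h hp (x := y1) (y := y2) (by omega) (by omega) (by omega)
          rw [vtx_eq_mk hp hb3 hb4 rfl rfl,
            vtx_eq_mk hp hb1 hb2 (by omega) (by omega)] at hadj
          exact hadj.symm

/-! ### Fooling set data (top-level, to keep terms omega-friendly) -/

def Xc (r : ℕ) (m : (k : Fin r) × Fin (ringSize k.val)) : ℕ :=
  (encRoot r m.1.val m.2.val).1

def Yc (r : ℕ) (m : (k : Fin r) × Fin (ringSize k.val)) : ℕ :=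
  (encRoot r m.1.val m.2.val).2.1

def Oc (r : ℕ) (m : (k : Fin r) × Fin (ringSize k.val)) : Bool :=
  (encRoot r m.1.val m.2.val).2.2

lemma spec_m {r : ℕ} (hr : 1 ≤ r) (m : (k : Fin r) × Fin (ringSize k.val)) :
    (Oc r m = true → PH (2 * r) (Xc r m) (Yc r m)) ∧
    (Oc r m = false → PV (2 * r) (Xc r m) (Yc r m)) :=
  encRoot_spec hr m.1.isLt m.2.isLt

lemma root_inj {r : ℕ} (hr : 1 ≤ r) {m m' : (k : Fin r) × Fin (ringSize k.val)}
    (hx : Xc r m = Xc r m') (hy : Yc r m = Yc r m') (ho : Oc r m = Oc r m') :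
    m = m' := by
  have henc : encRoot r m.1.val m.2.val = encRoot r m'.1.val m'.2.val :=
    Prod.ext hx (Prod.ext hy ho)
  obtain ⟨hk, ht⟩ := encRoot_inj hr m.1.isLt m.2.isLt m'.1.isLt m'.2.isLt henc
  obtain ⟨⟨k1, hk1⟩, ⟨t1, ht1⟩⟩ := m
  obtain ⟨⟨k2, hk2⟩, ⟨t2, ht2⟩⟩ := m'
  simp only at hk ht
  subst hk
  subst ht
  rfl

def fe1 (p : ℕ) (hp : 0 < p) (r : ℕ) (m : (k : Fin r) × Fin (ringSize k.val)) :
    Fin p × Fin p := vtx p hp (Xc r m) (Yc r m)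

def fe2 (p : ℕ) (hp : 0 < p) (r : ℕ) (m : (k : Fin r) × Fin (ringSize k.val)) :
    Fin p × Fin p :=
  if Oc r m = true then vtx p hp (Xc r m) (Yc r m + 1)
  else vtx p hp (Xc r m + 1) (Yc r m)

lemma fe2_t {p : ℕ} (hp : 0 < p) {r : ℕ} {m : (k : Fin r) × Fin (ringSize k.val)}
    (h : Oc r m = true) : fe2 p hp r m = vtx p hp (Xc r m) (Yc r m + 1) := by
  unfold fe2; rw [if_pos h]

lemma fe2_f {p : ℕ} (hp : 0 < p) {r : ℕ} {m : (k : Fin r) × Fin (ringSize k.val)}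
    (h : Oc r m = false) : fe2 p hp r m = vtx p hp (Xc r m + 1) (Yc r m) := by
  unfold fe2; rw [if_neg (by simp [h])]

set_option maxHeartbeats 4000000 in
theorem bc_grid_square (p : ℕ) (hp : 2 ≤ p) (heven : Even p) :
    bcn (gridGraph p p) = p * p / 2 - 1 := by
  obtain ⟨r, hpr'⟩ := heven
  have hpr : p = 2 * r := by omega
  have hr : 1 ≤ r := by omega
  have hp0 : 0 < p := by omega
  set N := 2 * r * r - 1 with hN
  have hgoal : p * p / 2 - 1 = N := by
    rw [hpr, hN]
    have : 2 * r * (2 * r) = 2 * r * r * 2 := by ring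
    rw [this, Nat.mul_div_cancel _ (by omega : 0 < 2)]
  rw [hgoal]
  -- membership: the explicit cover of size N
  have hmem : N ∈ {n | ∃ H : Fin n → SimpleGraph (Fin p × Fin p),
      (∀ i, IsBiclique (gridGraph p p) (H i)) ∧
      ∀ e ∈ (gridGraph p p).edgeSet, ∃ i, e ∈ (H i).edgeSet} := by
    refine ⟨fun i => coverFun p r hp0 i.val, fun i => coverFun_isBiclique p r hp0 i.val, ?_⟩
    intro e he
    induction e with
    | _ u v =>
      rw [SimpleGraph.mem_edgeSet] at he
      obtain ⟨i, hilt, hadj⟩ := coverage p r hp0 hr hpr u v he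
      exact ⟨⟨i, hilt⟩, SimpleGraph.mem_edgeSet _ |>.2 hadj⟩
  -- lower bound: every cover has at least N bicliques
  have hlb : ∀ n ∈ {n | ∃ H : Fin n → SimpleGraph (Fin p × Fin p),
      (∀ i, IsBiclique (gridGraph p p) (H i)) ∧
      ∀ e ∈ (gridGraph p p).edgeSet, ∃ i, e ∈ (H i).edgeSet}, N ≤ n := by
    rintro n ⟨H, hbic, hcov⟩
    classical
    have hpe : p % 2 = 0 := by omega
    have hspec : ∀ m : (k : Fin r) × Fin (ringSize k.val),
        (Oc r m = true → PH p (Xc r m) (Yc r m)) ∧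
        (Oc r m = false → PV p (Xc r m) (Yc r m)) := by
      intro m
      have := spec_m hr m
      rwa [← hpr] at this
    have hadj : ∀ m : (k : Fin r) × Fin (ringSize k.val),
        (gridGraph p p).Adj (fe1 p hp0 r m) (fe2 p hp0 r m) := by
      intro m
      rcases hO : Oc r m with _ | _
      · rw [fe2_f hp0 hO]
        obtain ⟨b1, b2, b3, b4, b5⟩ := (hspec m).2 hO
        exact vtx_adj p hp0 (by omega) (by omega) (by omega) (by omega)
          (by simp only [Nat.dist]; omega)
      · rw [fe2_t hp0 hO]
        obtain ⟨a1, a2, a3, a4, a5, a6⟩ := (hspec m).1 hO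
        exact vtx_adj p hp0 (by omega) (by omega) (by omega) (by omega)
          (by simp only [Nat.dist]; omega)
    have hmemE : ∀ m : (k : Fin r) × Fin (ringSize k.val),
        s(fe1 p hp0 r m, fe2 p hp0 r m) ∈ (gridGraph p p).edgeSet := fun m =>
      SimpleGraph.mem_edgeSet _ |>.2 (hadj m)
    let ψ : ((k : Fin r) × Fin (ringSize k.val)) → Fin n := fun m =>
      (hcov _ (hmemE m)).choose
    have hψ : ∀ m, s(fe1 p hp0 r m, fe2 p hp0 r m) ∈ (H (ψ m)).edgeSet := fun m =>
      (hcov _ (hmemE m)).choose_spec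
    have distfact : ∀ (a b c d : ℕ), a < p → b < p → c < p → d < p →
        (gridGraph p p).Adj (vtx p hp0 a b) (vtx p hp0 c d) →
        Nat.dist a c + Nat.dist b d = 1 := by
      intro a b c d ha hb hc hd hadj'
      have := adj_dist hadj'
      rwa [vtx_fst p hp0 a b ha, vtx_snd p hp0 a b hb, vtx_fst p hp0 c d hc,
        vtx_snd p hp0 c d hd] at this
    have hinj : Function.Injective ψ := by
      intro m m' hmm
      by_contra hne
      have h1 : (H (ψ m)).Adj (fe1 p hp0 r m) (fe2 p hp0 r m) :=
        SimpleGraph.mem_edgeSet _ |>.1 (hψ m)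
      have h2 : (H (ψ m)).Adj (fe1 p hp0 r m') (fe2 p hp0 r m') := by
        have := SimpleGraph.mem_edgeSet _ |>.1 (hψ m')
        rwa [← hmm] at this
      have hcross := cross_of_common (hbic (ψ m)) h1 h2
      rcases hOm : Oc r m with _ | _ <;> rcases hOm' : Oc r m' with _ | _
      · -- both vertical
        obtain ⟨b1, b2, b3, b4, b5⟩ := (hspec m).2 hOm
        obtain ⟨c1, c2, c3, c4, c5⟩ := (hspec m').2 hOm'
        rw [fe2_f hp0 hOm, fe2_f hp0 hOm'] at hcross
        unfold fe1 at hcross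
        refine noVV (p := p) ⟨b1, b2, b3, b4, b5⟩ ⟨c1, c2, c3, c4, c5⟩
          (fun hcc => hne (root_inj hr hcc.1 hcc.2 (by rw [hOm, hOm']))) ?_
        rcases hcross with ⟨d1, d2⟩ | ⟨d1, d2⟩
        · exact Or.inl ⟨distfact _ _ _ _ (by omega) (by omega) (by omega) (by omega) d1,
            distfact _ _ _ _ (by omega) (by omega) (by omega) (by omega) d2⟩
        · exact Or.inr ⟨distfact _ _ _ _ (by omega) (by omega) (by omega) (by omega) d1,
            distfact _ _ _ _ (by omega) (by omega) (by omega) (by omega) d2⟩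
      · -- m vertical, m' horizontal
        obtain ⟨b1, b2, b3, b4, b5⟩ := (hspec m).2 hOm
        obtain ⟨a1, a2, a3, a4, a5, a6⟩ := (hspec m').1 hOm'
        rw [fe2_f hp0 hOm, fe2_t hp0 hOm'] at hcross
        unfold fe1 at hcross
        refine noHV (p := p) hpe ⟨a1, a2, a3, a4, a5, a6⟩ ⟨b1, b2, b3, b4, b5⟩ ?_
        rcases hcross with ⟨d1, d2⟩ | ⟨d1, d2⟩
        · have f1 := distfact _ _ _ _ (by omega) (by omega) (by omega) (by omega) d1
          have f2 := distfact _ _ _ _ (by omega) (by omega) (by omega) (by omega) d2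
          refine Or.inr ⟨?_, ?_⟩ <;>
            · simp only [Nat.dist] at f1 f2 ⊢; omega
        · have f1 := distfact _ _ _ _ (by omega) (by omega) (by omega) (by omega) d1
          have f2 := distfact _ _ _ _ (by omega) (by omega) (by omega) (by omega) d2
          refine Or.inl ⟨?_, ?_⟩ <;>
            · simp only [Nat.dist] at f1 f2 ⊢; omega
      · -- m horizontal, m' vertical
        obtain ⟨a1, a2, a3, a4, a5, a6⟩ := (hspec m).1 hOm
        obtain ⟨b1, b2, b3, b4, b5⟩ := (hspec m').2 hOm'
        rw [fe2_t hp0 hOm, fe2_f hp0 hOm'] at hcross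
        unfold fe1 at hcross
        refine noHV (p := p) hpe ⟨a1, a2, a3, a4, a5, a6⟩ ⟨b1, b2, b3, b4, b5⟩ ?_
        rcases hcross with ⟨d1, d2⟩ | ⟨d1, d2⟩
        · have f1 := distfact _ _ _ _ (by omega) (by omega) (by omega) (by omega) d1
          have f2 := distfact _ _ _ _ (by omega) (by omega) (by omega) (by omega) d2
          refine Or.inl ⟨?_, ?_⟩ <;>
            · simp only [Nat.dist] at f1 f2 ⊢; omega
        · have f1 := distfact _ _ _ _ (by omega) (by omega) (by omega) (by omega) d1
          have f2 := distfact _ _ _ _ (by omega) (by omega) (by omega) (by omega) d2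
          refine Or.inr ⟨?_, ?_⟩ <;>
            · simp only [Nat.dist] at f1 f2 ⊢; omega
      · -- both horizontal
        obtain ⟨a1, a2, a3, a4, a5, a6⟩ := (hspec m).1 hOm
        obtain ⟨c1, c2, c3, c4, c5, c6⟩ := (hspec m').1 hOm'
        rw [fe2_t hp0 hOm, fe2_t hp0 hOm'] at hcross
        unfold fe1 at hcross
        refine noHH (p := p) ⟨a1, a2, a3, a4, a5, a6⟩ ⟨c1, c2, c3, c4, c5, c6⟩
          (fun hcc => hne (root_inj hr hcc.1 hcc.2 (by rw [hOm, hOm']))) ?_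
        rcases hcross with ⟨d1, d2⟩ | ⟨d1, d2⟩
        · exact Or.inl ⟨distfact _ _ _ _ (by omega) (by omega) (by omega) (by omega) d1,
            distfact _ _ _ _ (by omega) (by omega) (by omega) (by omega) d2⟩
        · exact Or.inr ⟨distfact _ _ _ _ (by omega) (by omega) (by omega) (by omega) d1,
            distfact _ _ _ _ (by omega) (by omega) (by omega) (by omega) d2⟩
    have hcard := Fintype.card_le_of_injective ψ hinj
    rw [card_index r hr, Fintype.card_fin] at hcard
    exact hcard
  exact le_antisymm (Nat.sInf_le hmem) (le_csInf ⟨N, hmem⟩ hlb)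
end
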